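/- arXiv:math/0008231 — 2 statements merged into one kernel-verified Lean document; each statement's English description precedes it below -/
import Mathlib

section
/- Two functions τ₁, τ₂ ∈ T lie in the same connected component of the Z-transformation graph on T if and only if τ₁(v) = τ₂(v) for every vertex v that belongs to a nontrivial cluster. -/
/-- A directed walk from `a` to `b` along edge relation `E`, recorded as the list of its
vertices. -/
def IsWalk {V : Type*} (E : V → V → Prop) (a b : V) (l : List V) : Prop :=
  l.head? = some a ∧ l.getLast? = some b ∧ l.Chain' E

/-- The total weight of a walk. -/
def walkWeight {V : Type*} (δ : V → V → ℤ) (l : List V) : ℤ :=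
  ((l.zip l.tail).map fun p => δ p.1 p.2).sum

/-- A negative cycle: a directed walk from some vertex to itself with at least one edge
and negative total weight. -/
def HasNegCycle {V : Type*} (E : V → V → Prop) (δ : V → V → ℤ) : Prop :=
  ∃ (a : V) (l : List V), IsWalk E a a l ∧ 2 ≤ l.length ∧ walkWeight δ l < 0

/-- The set `T` of admissible integer-valued functions normalized to vanish at `f₀`. -/
def Tset {V : Type*} (E : V → V → Prop) (δ : V → V → ℤ) (f₀ : V) : Set (V → ℤ) :=
  {τ | (∀ v w, E v w → τ w - τ v ≤ δ v w) ∧ τ f₀ = 0}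

/-- Two elements of `T` differ by a `Z`-transformation if they agree at every vertex except
exactly one, where they differ by exactly `1`. -/
def ZRel {V : Type*} (T : Set (V → ℤ)) (τ σ : V → ℤ) : Prop :=
  τ ∈ T ∧ σ ∈ T ∧ ∃ v, (∀ w, w ≠ v → σ w = τ w) ∧ (σ v = τ v + 1 ∨ σ v = τ v - 1)

section helpers
variable {V : Type*} (E : V → V → Prop) (δ : V → V → ℤ)

lemma walkWeight_cons_cons (x y : V) (l : List V) :
    walkWeight δ (x :: y :: l) = δ x y + walkWeight δ (y :: l) := by
  simp [walkWeight]

lemma walkWeight_singleton (x : V) : walkWeight δ [x] = 0 := by simp [walkWeight]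

lemma isWalk_singleton (a b x : V) : IsWalk E a b [x] ↔ x = a ∧ x = b := by
  simp [IsWalk, eq_comm, List.Chain']

lemma isWalk_cons_cons (a b x y : V) (l : List V) :
    IsWalk E a b (x :: y :: l) ↔ x = a ∧ E x y ∧ IsWalk E y b (y :: l) := by
  constructor
  · rintro ⟨h1, h2, h3⟩
    simp only [List.head?_cons, Option.some.injEq] at h1
    rw [List.Chain', List.isChain_cons_cons] at h3
    exact ⟨h1, h3.1, rfl, by simpa [List.getLast?_cons_cons] using h2, h3.2⟩
  · rintro ⟨rfl, hE, h1, h2, h3⟩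
    exact ⟨rfl, by simpa [List.getLast?_cons_cons] using h2, List.isChain_cons_cons.2 ⟨hE, h3⟩⟩

lemma two_le_length_of_ne {a b : V} {l : List V} (h : IsWalk E a b l) (hne : a ≠ b) :
    2 ≤ l.length := by
  match l with
  | [] => simp [IsWalk] at h
  | [x] => obtain ⟨rfl, rfl⟩ := (isWalk_singleton E a b x).1 h; exact absurd rfl hne
  | x :: y :: t => simp

/-- Telescoping inequality for admissible functions. -/
lemma telescope_le (τ : V → ℤ) (hτ : ∀ v w, E v w → τ w - τ v ≤ δ v w) :
    ∀ (l : List V) (a b : V), IsWalk E a b l → τ b - τ a ≤ walkWeight δ l := by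
  intro l
  induction l with
  | nil => intro a b h; simp [IsWalk] at h
  | cons x l ih =>
    intro a b h
    match l with
    | [] =>
      obtain ⟨rfl, rfl⟩ := (isWalk_singleton E a b x).1 h
      simp [walkWeight_singleton]
    | y :: l' =>
      obtain ⟨rfl, hE, hw⟩ := (isWalk_cons_cons E a b x y l').1 h
      have := ih y b hw
      have := hτ x y hE
      rw [walkWeight_cons_cons]
      omega

/-- Telescoping equality for tight walks. -/
lemma telescope_eq (τ : V → ℤ) (P : V → V → Prop)
    (hP : ∀ x y, P x y → E x y ∧ δ x y = τ y - τ x) :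
    ∀ (l : List V) (a b : V), l.head? = some a → l.getLast? = some b → l.Chain' P →
      IsWalk E a b l ∧ walkWeight δ l = τ b - τ a := by
  intro l
  induction l with
  | nil => intro a b h; simp at h
  | cons x l ih =>
    intro a b h1 h2 h3
    match l with
    | [] =>
      simp only [List.head?_cons, Option.some.injEq] at h1
      simp only [List.getLast?_singleton, Option.some.injEq] at h2
      subst h1; subst h2
      exact ⟨(isWalk_singleton E _ _ _).2 ⟨rfl, rfl⟩, by simp [walkWeight_singleton]⟩
    | y :: l' =>
      simp only [List.head?_cons, Option.some.injEq] at h1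
      subst h1
      rw [List.Chain', List.isChain_cons_cons] at h3
      obtain ⟨hE, hδ⟩ := hP x y h3.1
      obtain ⟨hw, hwt⟩ := ih y b rfl (by simpa [List.getLast?_cons_cons] using h2) h3.2
      refine ⟨(isWalk_cons_cons E x b x y l').2 ⟨rfl, hE, hw⟩, ?_⟩
      rw [walkWeight_cons_cons, hwt, hδ]; ring

/-- Concatenation of walks. -/
lemma walk_append :
    ∀ (l₁ l₂ : List V) (a b c : V), IsWalk E a b l₁ → IsWalk E b c l₂ →
      IsWalk E a c (l₁ ++ l₂.tail) ∧
      walkWeight δ (l₁ ++ l₂.tail) = walkWeight δ l₁ + walkWeight δ l₂ ∧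
      l₁.length ≤ (l₁ ++ l₂.tail).length := by
  intro l₁
  induction l₁ with
  | nil => intro l₂ a b c h; simp [IsWalk] at h
  | cons x l ih =>
    intro l₂ a b c h1 h2
    match l with
    | [] =>
      obtain ⟨rfl, rfl⟩ := (isWalk_singleton E a b x).1 h1
      have hl₂ : l₂ = x :: l₂.tail := by
        obtain ⟨hh, -, -⟩ := h2
        cases l₂ with
        | nil => simp at hh
        | cons z t => simp only [List.head?_cons, Option.some.injEq] at hh; simp [hh]
      refine ⟨?_, ?_, ?_⟩
      · rw [List.singleton_append, ← hl₂]; exact h2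
      · rw [List.singleton_append, ← hl₂, walkWeight_singleton]; ring
      · simp
    | y :: l' =>
      obtain ⟨rfl, hE, hw⟩ := (isWalk_cons_cons E a b x y l').1 h1
      obtain ⟨hW, hwt, hlen⟩ := ih l₂ y b c hw h2
      have hcons : (x :: y :: l') ++ l₂.tail = x :: ((y :: l') ++ l₂.tail) := by simp
      rw [hcons]
      have hform : (y :: l') ++ l₂.tail = y :: (l' ++ l₂.tail) := by simp
      rw [hform] at hW hwt hlen ⊢
      refine ⟨(isWalk_cons_cons E x c x y (l' ++ l₂.tail)).2 ⟨rfl, hE, hW⟩, ?_, ?_⟩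
      · rw [walkWeight_cons_cons, walkWeight_cons_cons, hwt]; ring
      · simpa using hlen

end helpers

section Dfacts
variable {V : Type*} {E : V → V → Prop} {δ : V → V → ℤ} {D : V → V → ℤ}

lemma D_sum_nonneg (hnoneg : ¬ HasNegCycle E δ)
    (hD : ∀ v w, IsLeast {x : ℤ | ∃ l : List V, IsWalk E v w l ∧ walkWeight δ l = x} (D v w))
    {v w : V} (hne : v ≠ w) : 0 ≤ D v w + D w v := by
  by_contra hlt
  push_neg at hlt
  obtain ⟨l₁, hw₁, he₁⟩ := (hD v w).1
  obtain ⟨l₂, hw₂, he₂⟩ := (hD w v).1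
  obtain ⟨hW, hwt, hlen⟩ := walk_append E δ l₁ l₂ v w v hw₁ hw₂
  exact hnoneg ⟨v, l₁ ++ l₂.tail, hW,
    le_trans (two_le_length_of_ne E hw₁ hne) hlen, by rw [hwt, he₁, he₂]; exact hlt⟩

lemma cluster_fixed
    (hD : ∀ v w, IsLeast {x : ℤ | ∃ l : List V, IsWalk E v w l ∧ walkWeight δ l = x} (D v w))
    {τ : V → ℤ} (hτ : ∀ v w, E v w → τ w - τ v ≤ δ v w)
    {v w : V} (hc : D v w + D w v = 0) : τ w - τ v = D v w := by
  obtain ⟨l₁, hw₁, he₁⟩ := (hD v w).1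
  obtain ⟨l₂, hw₂, he₂⟩ := (hD w v).1
  have h1 := telescope_le E δ τ hτ l₁ v w hw₁
  have h2 := telescope_le E δ τ hτ l₂ w v hw₂
  omega

end Dfacts

section Step
variable {V : Type*} [Fintype V] [DecidableEq V] {E : V → V → Prop} {δ : V → V → ℤ} {D : V → V → ℤ} {f₀ : V}

/-- If `σ₁, σ₂ ∈ T` agree on nontrivial-cluster vertices and `σ₁` exceeds `σ₂` somewhere,
then we can decrease `σ₁` by one at a vertex where the difference is maximal. -/
lemma step_lemma (hnoneg : ¬ HasNegCycle E δ)
    (hD : ∀ v w, IsLeast {x : ℤ | ∃ l : List V, IsWalk E v w l ∧ walkWeight δ l = x} (D v w))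
    {σ₁ σ₂ : V → ℤ} (hσ₁ : σ₁ ∈ Tset E δ f₀) (hσ₂ : σ₂ ∈ Tset E δ f₀)
    (hag : ∀ v : V, (∃ w, w ≠ v ∧ D v w + D w v = 0) → σ₁ v = σ₂ v)
    (hexv : ∃ v, σ₂ v < σ₁ v) :
    ∃ u, σ₂ u < σ₁ u ∧ Function.update σ₁ u (σ₁ u - 1) ∈ Tset E δ f₀ := by
  classical
  obtain ⟨v₀, hv₀⟩ := hexv
  have hne : (Finset.univ : Finset V).Nonempty := ⟨v₀, Finset.mem_univ v₀⟩
  obtain ⟨vm, -, hvm⟩ := Finset.exists_mem_eq_sup' hne (fun v => σ₁ v - σ₂ v)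
  set M : ℤ := σ₁ vm - σ₂ vm with hMdef
  have hMub : ∀ v, σ₁ v - σ₂ v ≤ M := by
    intro v; rw [← hvm]; exact Finset.le_sup' (fun v => σ₁ v - σ₂ v) (Finset.mem_univ v)
  have hMpos : 0 < M := by have := hMub v₀; omega
  by_cases hex : ∃ u, σ₁ u - σ₂ u = M ∧ ∀ w, w ≠ u → E u w → σ₁ w - σ₁ u < δ u w
  · obtain ⟨u, huM, hu⟩ := hex
    refine ⟨u, by omega, ?_, ?_⟩
    · -- admissibility of the update
      intro v w hE
      by_cases hv : v = u <;> by_cases hw : w = u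
      · subst hv; subst hw
        have := hσ₁.1 _ _ hE
        simp only [Function.update_self]
        omega
      · subst hv
        have := hu w hw hE
        rw [Function.update_of_ne hw, Function.update_self]
        omega
      · subst hw
        have := hσ₁.1 v _ hE
        rw [Function.update_of_ne hv, Function.update_self]
        omega
      · rw [Function.update_of_ne hv, Function.update_of_ne hw]
        exact hσ₁.1 v w hE
    · -- value at f₀
      have huf : u ≠ f₀ := by
        intro h; subst h
        have := hσ₁.2; have := hσ₂.2; omega
      rw [Function.update_of_ne (Ne.symm huf)]
      exact hσ₁.2
  · -- otherwise every max vertex has a tight outgoing edge; derive a contradiction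
    exfalso
    push_neg at hex
    have hex' : ∀ u, σ₁ u - σ₂ u = M → ∃ w, w ≠ u ∧ E u w ∧ δ u w = σ₁ w - σ₁ u := by
      intro u huM
      obtain ⟨w, hw1, hw2, hw3⟩ := hex u huM
      exact ⟨w, hw1, hw2, le_antisymm hw3 (hσ₁.1 u w hw2)⟩
    set g : V → V := fun v =>
      if h : σ₁ v - σ₂ v = M then (hex' v h).choose else v with hgdef
    have hgS : ∀ v, σ₁ v - σ₂ v = M →
        g v ≠ v ∧ E v (g v) ∧ δ v (g v) = σ₁ (g v) - σ₁ v ∧ σ₁ (g v) - σ₂ (g v) = M := by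
      intro v hv
      have hspec := (hex' v hv).choose_spec
      have hg : g v = (hex' v hv).choose := by simp [hgdef, hv]
      rw [hg]
      obtain ⟨h1, h2, h3⟩ := hspec
      refine ⟨h1, h2, h3, ?_⟩
      have h4 := hσ₂.1 v _ h2
      have h5 := hMub ((hex' v hv).choose)
      omega
    have hvmM : σ₁ vm - σ₂ vm = M := rfl
    have hiter : ∀ n, σ₁ (g^[n] vm) - σ₂ (g^[n] vm) = M := by
      intro n
      induction n with
      | zero => simpa using hvmM
      | succ n ihn =>
        rw [Function.iterate_succ_apply']
        exact (hgS _ ihn).2.2.2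
    -- pigeonhole: iterates repeat
    obtain ⟨i, j, hij, heq⟩ := Finite.exists_ne_map_eq_of_infinite (fun n : ℕ => g^[n] vm)
    wlog hlt : i < j generalizing i j
    · exact this j i (Ne.symm hij) heq.symm (by omega)
    set c : V := g^[i] vm with hcdef
    have hcM : σ₁ c - σ₂ c = M := hiter i
    have hm : g^[j - i] c = c := by
      rw [hcdef, ← Function.iterate_add_apply]
      have : j - i + i = j := by omega
      rw [this]
      exact heq.symm
    have hgc := hgS c hcM
    have hm2 : 1 ≤ j - i := by omega
    -- build tight walks
    have build : ∀ n x, σ₁ x - σ₂ x = M → ∃ l : List V, l.head? = some x ∧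
        l.getLast? = some (g^[n] x) ∧
        l.Chain' (fun p q => E p q ∧ δ p q = σ₁ q - σ₁ p) := by
      intro n
      induction n with
      | zero => intro x hx; exact ⟨[x], by simp, by simp, by simp [List.Chain']⟩
      | succ n ihn =>
        intro x hx
        obtain ⟨hne', hE, hδ, hM'⟩ := hgS x hx
        obtain ⟨l, hh, hlast, hch⟩ := ihn (g x) hM'
        refine ⟨x :: l, by simp, ?_, ?_⟩
        · cases l with
          | nil => simp at hh
          | cons z t =>
            rw [List.getLast?_cons_cons]
            rw [Function.iterate_succ_apply]
            exact hlast
        · refine List.isChain_cons.2 ⟨?_, hch⟩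
          intro y hy
          rw [hh] at hy
          simp only [Option.mem_def, Option.some.injEq] at hy
          subst hy
          exact ⟨hE, hδ⟩
    -- walk from g c back to c
    have hMgc : σ₁ (g c) - σ₂ (g c) = M := hgc.2.2.2
    obtain ⟨l₂, hh₂, hlast₂, hch₂⟩ := build (j - i - 1) (g c) hMgc
    have hlast₂' : l₂.getLast? = some c := by
      rw [hlast₂]
      congr 1
      rw [← Function.iterate_succ_apply]
      simp only [Nat.succ_eq_add_one]
      have : j - i - 1 + 1 = j - i := by omega
      rw [this]
      exact hm
    obtain ⟨hW₂, hwt₂⟩ := telescope_eq E δ σ₁ _ (fun x y h => h) l₂ (g c) c hh₂ hlast₂' hch₂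
    -- walk from c to g c
    have hW₁ : IsWalk E c (g c) [c, g c] :=
      (isWalk_cons_cons E c (g c) c (g c) []).2 ⟨rfl, hgc.2.1, (isWalk_singleton E _ _ _).2 ⟨rfl, rfl⟩⟩
    have hwt₁ : walkWeight δ [c, g c] = σ₁ (g c) - σ₁ c := by
      rw [walkWeight_cons_cons, walkWeight_singleton, hgc.2.2.1]; ring
    have hD₁ : D c (g c) ≤ σ₁ (g c) - σ₁ c := (hD c (g c)).2 ⟨[c, g c], hW₁, hwt₁⟩
    have hD₂ : D (g c) c ≤ σ₁ c - σ₁ (g c) := (hD (g c) c).2 ⟨l₂, hW₂, hwt₂⟩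
    have hnn := D_sum_nonneg hnoneg hD (Ne.symm hgc.1)
    have hcl : σ₁ c = σ₂ c := hag c ⟨g c, hgc.1, by omega⟩
    omega

end Step

lemma zrel_symm {V : Type*} {T : Set (V → ℤ)} {a b : V → ℤ} (h : ZRel T a b) : ZRel T b a := by
  obtain ⟨ha, hb, v, hw, hv⟩ := h
  exact ⟨hb, ha, v, fun w h => (hw w h).symm, by omega⟩

lemma sum_update_decrease {V : Type*} [Fintype V] [DecidableEq V]
    (σ₁ σ₂ : V → ℤ) (u : V) (hu : σ₂ u < σ₁ u) :
    (∑ v, (Function.update σ₁ u (σ₁ u - 1) v - σ₂ v).natAbs) + 1 =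
      ∑ v, (σ₁ v - σ₂ v).natAbs := by
  have h1 := Finset.sum_eq_sum_sdiff_singleton_add (Finset.mem_univ u)
    (fun v => (Function.update σ₁ u (σ₁ u - 1) v - σ₂ v).natAbs)
  have h2 := Finset.sum_eq_sum_sdiff_singleton_add (Finset.mem_univ u)
    (fun v => (σ₁ v - σ₂ v).natAbs)
  have h3 : ∑ v ∈ Finset.univ \ {u}, (Function.update σ₁ u (σ₁ u - 1) v - σ₂ v).natAbs =
      ∑ v ∈ Finset.univ \ {u}, (σ₁ v - σ₂ v).natAbs := by
    refine Finset.sum_congr rfl (fun v hv => ?_)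
    have hvne : v ≠ u := by simp only [Finset.mem_sdiff, Finset.mem_singleton] at hv; exact hv.2
    rw [Function.update_of_ne hvne]
  rw [h1, h2, h3, Function.update_self]
  omega

/-- Two functions `τ₁, τ₂ ∈ T` lie in the same connected component of the
`Z`-transformation graph on `T` iff they agree at every vertex belonging to a nontrivial
cluster (a vertex `v` for which there is `w ≠ v` with `D v w + D w v = 0`). -/
theorem zGraph_component_iff_agree_on_nontrivial_clusters
    {V : Type*} [Fintype V] (E : V → V → Prop) (δ : V → V → ℤ)
    (hsymm : ∀ v w, E v w ↔ E w v)
    (hconn : ∀ v w : V, ∃ l : List V, IsWalk E v w l)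
    (hnoneg : ¬ HasNegCycle E δ)
    (D : V → V → ℤ)
    (hD : ∀ v w, IsLeast {x : ℤ | ∃ l : List V, IsWalk E v w l ∧ walkWeight δ l = x} (D v w))
    (f₀ : V) (τ₁ τ₂ : V → ℤ)
    (h₁ : τ₁ ∈ Tset E δ f₀) (h₂ : τ₂ ∈ Tset E δ f₀) :
    Relation.ReflTransGen (ZRel (Tset E δ f₀)) τ₁ τ₂ ↔
      ∀ v : V, (∃ w, w ≠ v ∧ D v w + D w v = 0) → τ₁ v = τ₂ v := by
  classical
  constructor
  · intro h v hv
    obtain ⟨w, hwne, hc⟩ := hv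
    clear h₂ h₁
    induction h with
    | refl => rfl
    | @tail b c hab hbc ih =>
      obtain ⟨hbT, hcT, u, huw, huv⟩ := hbc
      have hbfix : b w - b v = D v w := cluster_fixed hD hbT.1 hc
      have hcfix : c w - c v = D v w := cluster_fixed hD hcT.1 hc
      by_cases h' : u = v
      · rw [h'] at huv
        have hww : c w = b w := huw w (by rw [h']; exact hwne)
        have hibv : τ₁ v = b v := ih
        rcases huv with h'' | h'' <;> omega
      · exact ih.trans (huw v (fun he => h' he.symm)).symm
  · intro hag
    have main : ∀ N : ℕ, ∀ σ₁ σ₂ : V → ℤ, σ₁ ∈ Tset E δ f₀ → σ₂ ∈ Tset E δ f₀ →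
        (∀ v : V, (∃ w, w ≠ v ∧ D v w + D w v = 0) → σ₁ v = σ₂ v) →
        (∑ v, (σ₁ v - σ₂ v).natAbs) = N →
        Relation.ReflTransGen (ZRel (Tset E δ f₀)) σ₁ σ₂ := by
      intro N
      induction N using Nat.strong_induction_on with
      | _ N ih =>
        intro σ₁ σ₂ hσ₁ hσ₂ hagr hN
        by_cases hz : ∀ v, σ₁ v = σ₂ v
        · rw [funext hz]
        · push_neg at hz
          obtain ⟨v₀, hv₀⟩ := hz
          rcases lt_or_gt_of_ne hv₀ with hlt | hgt
          · -- σ₁ v₀ < σ₂ v₀ : decrease σ₂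
            have hagr' : ∀ v : V, (∃ w, w ≠ v ∧ D v w + D w v = 0) → σ₂ v = σ₁ v :=
              fun v h => (hagr v h).symm
            obtain ⟨u, hu, hT'⟩ := step_lemma hnoneg hD hσ₂ hσ₁ hagr' ⟨v₀, hlt⟩
            have huncl : ∀ v : V, (∃ w, w ≠ v ∧ D v w + D w v = 0) →
                σ₁ v = Function.update σ₂ u (σ₂ u - 1) v := by
              intro v h
              have hvne : v ≠ u := by
                intro he; subst he; have := hagr v h; omega
              rw [Function.update_of_ne hvne]
              exact hagr v h
            have hzrel : ZRel (Tset E δ f₀) σ₂ (Function.update σ₂ u (σ₂ u - 1)) :=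
              ⟨hσ₂, hT', u, fun w hw => Function.update_of_ne hw _ _,
                Or.inr (Function.update_self _ _ _)⟩
            have hsum := sum_update_decrease σ₂ σ₁ u hu
            have e1 : ∑ v, (σ₁ v - Function.update σ₂ u (σ₂ u - 1) v).natAbs =
                ∑ v, (Function.update σ₂ u (σ₂ u - 1) v - σ₁ v).natAbs :=
              Finset.sum_congr rfl (fun v _ => by omega)
            have e2 : ∑ v, (σ₂ v - σ₁ v).natAbs = N := by
              rw [← hN]; exact Finset.sum_congr rfl (fun v _ => by omega)
            have hsum' : (∑ v, (σ₁ v - Function.update σ₂ u (σ₂ u - 1) v).natAbs) + 1 = N := by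
              omega
            have hrec := ih _ (by omega) σ₁ (Function.update σ₂ u (σ₂ u - 1)) hσ₁ hT' huncl rfl
            exact hrec.tail (zrel_symm hzrel)
          · -- σ₂ v₀ < σ₁ v₀ : decrease σ₁
            obtain ⟨u, hu, hT'⟩ := step_lemma hnoneg hD hσ₁ hσ₂ hagr ⟨v₀, hgt⟩
            have huncl : ∀ v : V, (∃ w, w ≠ v ∧ D v w + D w v = 0) →
                Function.update σ₁ u (σ₁ u - 1) v = σ₂ v := by
              intro v h
              have hvne : v ≠ u := by
                intro he; subst he; have := hagr v h; omega
              rw [Function.update_of_ne hvne]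
              exact hagr v h
            have hzrel : ZRel (Tset E δ f₀) σ₁ (Function.update σ₁ u (σ₁ u - 1)) :=
              ⟨hσ₁, hT', u, fun w hw => Function.update_of_ne hw _ _,
                Or.inr (Function.update_self _ _ _)⟩
            have hsum := sum_update_decrease σ₁ σ₂ u hu
            have hrec := ih _ (by omega) (Function.update σ₁ u (σ₁ u - 1)) σ₂ hT' hσ₂ huncl rfl
            exact hrec.head hzrel
    exact main _ τ₁ τ₂ h₁ h₂ hag rfl
end

section
/- If τ₁, τ₂ ∈ T satisfy τ₁(v) = τ₂(v) for every vertex v belonging to a nontrivial cluster, then τ₁ can be transformed into τ₂ by a sequence of at most Σ_{v ∈ V} |τ₁(v) − τ₂(v)| Z-transformations; that is, the distance between τ₁ and τ₂ in the Z-transformation graph on T is at most Σ_{v ∈ V} |τ₁(v) − τ₂(v)|. -/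
section Aux

variable {V : Type*} {E : V → V → Prop} {δ : V → V → ℤ}

lemma walkWeight_cons₂ (δ : V → V → ℤ) (a b : V) (l : List V) :
    walkWeight δ (a :: b :: l) = δ a b + walkWeight δ (b :: l) := by
  simp [walkWeight]

lemma walkWeight_single (δ : V → V → ℤ) (a : V) : walkWeight δ [a] = 0 := by simp [walkWeight]

lemma sub_le_walkWeight (τ : V → ℤ) (hadm : ∀ v w, E v w → τ w - τ v ≤ δ v w) :
    ∀ (l : List V) (a b : V), IsWalk E a b l → τ b - τ a ≤ walkWeight δ l := by
  intro l
  induction l with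
  | nil => intro a b h; simp [IsWalk] at h
  | cons x t ih =>
    intro a b h
    obtain ⟨h1, h2, h3⟩ := h
    have hxa : x = a := by simpa using h1
    subst hxa
    cases t with
    | nil =>
      have : x = b := by simpa using h2
      subst this; simp [walkWeight_single]
    | cons y t' =>
      have hE : E x y := (List.isChain_cons_cons.mp h3).1
      have hw : IsWalk E y b (y :: t') := by
        refine ⟨rfl, ?_, (List.isChain_cons_cons.mp h3).2⟩
        rw [← h2]; exact List.getLast?_cons_cons.symm
      have h4 := ih y b hw
      rw [walkWeight_cons₂]
      have h5 := hadm x y hE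
      omega

lemma walkWeight_append (δ : V → V → ℤ) :
    ∀ (l₁ : List V) (w : V) (t : List V), l₁.getLast? = some w →
      walkWeight δ (l₁ ++ t) = walkWeight δ l₁ + walkWeight δ (w :: t) := by
  intro l₁
  induction l₁ with
  | nil => intro w t h; simp at h
  | cons x l ih =>
    intro w t h
    cases l with
    | nil =>
      have : x = w := by simpa using h
      subst this
      simp [walkWeight]
    | cons y l' =>
      rw [List.getLast?_cons_cons] at h
      have h2 := ih w t h
      simp only [List.cons_append] at *
      rw [walkWeight_cons₂, walkWeight_cons₂, h2]
      ring

lemma D_pair_nonneg (hnoneg : ¬ HasNegCycle E δ) (D : V → V → ℤ)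
    (hD : ∀ v w, IsLeast {x : ℤ | ∃ l : List V, IsWalk E v w l ∧ walkWeight δ l = x} (D v w))
    (v w : V) (hvw : v ≠ w) : 0 ≤ D v w + D w v := by
  obtain ⟨l₁, hw₁, e₁⟩ := (hD v w).1
  obtain ⟨l₂, hw₂, e₂⟩ := (hD w v).1
  obtain ⟨h11, h12, h13⟩ := hw₁
  obtain ⟨h21, h22, h23⟩ := hw₂
  cases l₂ with
  | nil => simp at h21
  | cons x t =>
    have hxw : x = w := by simpa using h21
    subst hxw
    cases t with
    | nil =>
      exfalso
      have hxv : x = v := by simpa using h22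
      exact hvw hxv.symm
    | cons y t' =>
      by_contra hneg
      push_neg at hneg
      apply hnoneg
      refine ⟨v, l₁ ++ (y :: t'), ⟨?_, ?_, ?_⟩, ?_, ?_⟩
      · have hne : l₁ ≠ [] := by rintro rfl; simp at h11
        rw [List.head?_append_of_ne_nil _ hne]
        exact h11
      · rw [List.getLast?_append_of_ne_nil _ (by simp)]
        simpa using h22
      · refine List.isChain_append.mpr ?_
        refine ⟨h13, (List.isChain_cons_cons.mp h23).2, ?_⟩
        intro a ha b hb
        rw [h12] at ha
        simp at ha hb
        subst ha; subst hb
        exact (List.isChain_cons_cons.mp h23).1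
      · have hne : l₁ ≠ [] := by rintro rfl; simp at h11
        have : 1 ≤ l₁.length := List.length_pos_iff.mpr hne
        simp only [List.length_append, List.length_cons]
        omega
      · rw [walkWeight_append δ l₁ x (y :: t') h12, e₁, e₂]
        omega

/-- The walk `v, g v, g² v, …, g^[n] v`. -/
def iterList (g : V → V) : ℕ → V → List V
  | 0, v => [v]
  | (n+1), v => v :: iterList g n (g v)

lemma iterList_head (g : V → V) (n : ℕ) (v : V) : ∃ t, iterList g n v = v :: t := by
  cases n with
  | zero => exact ⟨[], rfl⟩
  | succ m => exact ⟨iterList g m (g v), rfl⟩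

lemma iterList_isWalk (g : V → V) :
    ∀ (n : ℕ) (v : V), (∀ k < n, E (g^[k] v) (g^[k+1] v)) →
      IsWalk E v (g^[n] v) (iterList g n v) := by
  intro n
  induction n with
  | zero => intro v _; exact ⟨rfl, rfl, List.isChain_singleton v⟩
  | succ m ih =>
    intro v hE
    have hE' : ∀ k < m, E (g^[k] (g v)) (g^[k+1] (g v)) := by
      intro k hk
      have := hE (k+1) (by omega)
      simpa [Function.iterate_succ_apply] using this
    obtain ⟨hh, hl, hc⟩ := ih (g v) hE'
    obtain ⟨t, ht⟩ := iterList_head g m (g v)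
    refine ⟨rfl, ?_, ?_⟩
    · show (v :: iterList g m (g v)).getLast? = _
      rw [ht, List.getLast?_cons_cons, ← ht, hl, Function.iterate_succ_apply]
    · show List.IsChain E (v :: iterList g m (g v))
      rw [ht, List.isChain_cons_cons, ← ht]
      constructor
      · have h0 := hE 0 (by omega)
        simpa using h0
      · exact hc

lemma iterList_weight (g : V → V) (τ : V → ℤ) :
    ∀ (n : ℕ) (v : V), (∀ k < n, δ (g^[k] v) (g^[k+1] v) = τ (g^[k+1] v) - τ (g^[k] v)) →
      walkWeight δ (iterList g n v) = τ (g^[n] v) - τ v := by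
  intro n
  induction n with
  | zero => intro v _; simp [iterList, walkWeight]
  | succ m ih =>
    intro v ht
    have ht' : ∀ k < m, δ (g^[k] (g v)) (g^[k+1] (g v)) = τ (g^[k+1] (g v)) - τ (g^[k] (g v)) := by
      intro k hk
      have := ht (k+1) (by omega)
      simpa [Function.iterate_succ_apply] using this
    have hw := ih (g v) ht'
    obtain ⟨t, hteq⟩ := iterList_head g m (g v)
    show walkWeight δ (v :: iterList g m (g v)) = _
    rw [hteq, walkWeight_cons₂, ← hteq, hw]
    have h0 := ht 0 (by omega)
    simp only [zero_add, Function.iterate_zero, id_eq, Function.iterate_one] at h0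
    rw [h0, Function.iterate_succ_apply]
    ring

/-- Core lemma: a cycle of tight edges produces a pair of distinct vertices whose
round-trip distance is zero. -/
lemma tight_orbit (hnoneg : ¬ HasNegCycle E δ) (D : V → V → ℤ)
    (hD : ∀ v w, IsLeast {x : ℤ | ∃ l : List V, IsWalk E v w l ∧ walkWeight δ l = x} (D v w))
    (g : V → V) (τ : V → ℤ) (v : V) (p : ℕ) (hp : 1 ≤ p)
    (hper : g^[p] v = v) (hgv : g v ≠ v)
    (hE : ∀ k, E (g^[k] v) (g^[k+1] v))
    (ht : ∀ k, δ (g^[k] v) (g^[k+1] v) = τ (g^[k+1] v) - τ (g^[k] v)) :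
    D v (g v) + D (g v) v = 0 := by
  have hE0 : E v (g v) := by simpa using hE 0
  have ht0 : δ v (g v) = τ (g v) - τ v := by simpa using ht 0
  have h1 : D v (g v) ≤ δ v (g v) := by
    refine (hD v (g v)).2 ⟨[v, g v], ⟨rfl, rfl, ?_⟩, ?_⟩
    · exact List.isChain_pair.mpr hE0
    · simp [walkWeight]
  have h2 : D (g v) v ≤ τ v - τ (g v) := by
    have hE' : ∀ k < p - 1, E (g^[k] (g v)) (g^[k+1] (g v)) := by
      intro k _
      have h := hE (k+1)
      simp only [Function.iterate_succ_apply] at h ⊢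
      exact h
    have ht' : ∀ k < p - 1, δ (g^[k] (g v)) (g^[k+1] (g v))
        = τ (g^[k+1] (g v)) - τ (g^[k] (g v)) := by
      intro k _
      have h := ht (k+1)
      simp only [Function.iterate_succ_apply] at h ⊢
      exact h
    have hwalk := iterList_isWalk g (p-1) (g v) hE'
    have hwt := iterList_weight g τ (p-1) (g v) ht'
    have hend : g^[p-1] (g v) = v := by
      have h' : g^[p - 1 + 1] v = v := by rw [Nat.sub_add_cancel hp]; exact hper
      rw [Function.iterate_succ_apply] at h'
      exact h'
    rw [hend] at hwalk hwt
    exact (hD (g v) v).2 ⟨iterList g (p-1) (g v), hwalk, hwt⟩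
  have h3 : 0 ≤ D v (g v) + D (g v) v :=
    D_pair_nonneg hnoneg D hD v (g v) (Ne.symm hgv)
  omega

/-- Pigeonhole: from a self-map and a start vertex obtain a periodic point on the orbit. -/
lemma exists_periodic [Finite V] (g : V → V) (v₀ : V) :
    ∃ (m p : ℕ), 1 ≤ p ∧ g^[p] (g^[m] v₀) = g^[m] v₀ := by
  obtain ⟨a, b, hab, heq⟩ := Finite.exists_ne_map_eq_of_infinite (fun n : ℕ => g^[n] v₀)
  rcases Nat.lt_or_ge a b with h | h
  · refine ⟨a, b - a, by omega, ?_⟩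
    rw [← Function.iterate_add_apply]
    rw [show b - a + a = b by omega]
    exact heq.symm
  · have hba : b < a := by omega
    refine ⟨b, a - b, by omega, ?_⟩
    rw [← Function.iterate_add_apply]
    rw [show a - b + b = a by omega]
    exact heq

lemma exists_good_dec [Finite V] (hnoneg : ¬ HasNegCycle E δ) (D : V → V → ℤ)
    (hD : ∀ v w, IsLeast {x : ℤ | ∃ l : List V, IsWalk E v w l ∧ walkWeight δ l = x} (D v w))
    (σ τ : V → ℤ)
    (hσ : ∀ v w, E v w → σ w - σ v ≤ δ v w)
    (hτ : ∀ v w, E v w → τ w - τ v ≤ δ v w)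
    (hle : ∀ v, σ v ≤ τ v)
    (hS : ∀ v, σ v < τ v → ∀ w, w ≠ v → D v w + D w v ≠ 0)
    (v₀ : V) (hv₀ : σ v₀ < τ v₀) :
    ∃ v, σ v < τ v ∧ ∀ w, E v w → w ≠ v → τ w - τ v < δ v w := by
  by_contra hcon
  push_neg at hcon
  have hg : ∀ v, ∃ w, σ v < τ v →
      (σ w < τ w ∧ w ≠ v ∧ E v w ∧ δ v w = τ w - τ v) := by
    intro v
    by_cases hv : σ v < τ v
    · obtain ⟨w, hEw, hwv, hge⟩ := hcon v hv
      have heq : δ v w = τ w - τ v := le_antisymm hge (hτ v w hEw)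
      have hwS : σ w < τ w := by
        by_contra hw
        have hww : σ w = τ w := le_antisymm (hle w) (by omega)
        have := hσ v w hEw
        omega
      exact ⟨w, fun _ => ⟨hwS, hwv, hEw, heq⟩⟩
    · exact ⟨v, fun h => absurd h hv⟩
  choose g hg using hg
  have horb : ∀ k, σ (g^[k] v₀) < τ (g^[k] v₀) := by
    intro k
    induction k with
    | zero => simpa using hv₀
    | succ n ih =>
      rw [Function.iterate_succ_apply']
      exact (hg _ ih).1
  obtain ⟨m, p, hp, hper⟩ := exists_periodic g v₀
  set v := g^[m] v₀ with hv
  have horb' : ∀ k, σ (g^[k] v) < τ (g^[k] v) := by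
    intro k
    rw [hv, ← Function.iterate_add_apply]
    exact horb (k + m)
  have hvS : σ v < τ v := by simpa using horb' 0
  have hgv : g v ≠ v := (hg v hvS).2.1
  have hE : ∀ k, E (g^[k] v) (g^[k+1] v) := by
    intro k
    rw [Function.iterate_succ_apply']
    exact (hg _ (horb' k)).2.2.1
  have htight : ∀ k, δ (g^[k] v) (g^[k+1] v) = τ (g^[k+1] v) - τ (g^[k] v) := by
    intro k
    rw [Function.iterate_succ_apply']
    exact (hg _ (horb' k)).2.2.2
  exact hS v hvS (g v) hgv (tight_orbit hnoneg D hD g τ v p hp hper hgv hE htight)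

lemma exists_good_inc [Finite V] (hnoneg : ¬ HasNegCycle E δ) (D : V → V → ℤ)
    (hD : ∀ v w, IsLeast {x : ℤ | ∃ l : List V, IsWalk E v w l ∧ walkWeight δ l = x} (D v w))
    (σ τ : V → ℤ)
    (hσ : ∀ v w, E v w → σ w - σ v ≤ δ v w)
    (hτ : ∀ v w, E v w → τ w - τ v ≤ δ v w)
    (hle : ∀ v, σ v ≤ τ v)
    (hS : ∀ v, σ v < τ v → ∀ w, w ≠ v → D v w + D w v ≠ 0)
    (v₀ : V) (hv₀ : σ v₀ < τ v₀) :
    ∃ v, σ v < τ v ∧ ∀ u, E u v → u ≠ v → σ v - σ u < δ u v := by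
  by_contra hcon
  push_neg at hcon
  have hg : ∀ v, ∃ u, σ v < τ v →
      (σ u < τ u ∧ u ≠ v ∧ E u v ∧ δ u v = σ v - σ u) := by
    intro v
    by_cases hv : σ v < τ v
    · obtain ⟨u, hEu, huv, hge⟩ := hcon v hv
      have heq : δ u v = σ v - σ u := le_antisymm hge (hσ u v hEu)
      have huS : σ u < τ u := by
        by_contra hu
        have huu : σ u = τ u := le_antisymm (hle u) (by omega)
        have h5 := hτ u v hEu
        omega
      exact ⟨u, fun _ => ⟨huS, huv, hEu, heq⟩⟩
    · exact ⟨v, fun h => absurd h hv⟩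
  choose g hg using hg
  have horb : ∀ k, σ (g^[k] v₀) < τ (g^[k] v₀) := by
    intro k
    induction k with
    | zero => simpa using hv₀
    | succ n ih =>
      rw [Function.iterate_succ_apply']
      exact (hg _ ih).1
  obtain ⟨m, p, hp, hper⟩ := exists_periodic g v₀
  set v := g^[m] v₀ with hvdef
  have horb' : ∀ k, σ (g^[k] v) < τ (g^[k] v) := by
    intro k
    rw [hvdef, ← Function.iterate_add_apply]
    exact horb (k + m)
  have hvS : σ v < τ v := by simpa using horb' 0
  have hgv : g v ≠ v := (hg v hvS).2.1
  have hkey : ∀ j, E (g^[j] v) (g^[p-1+j] v) ∧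
      δ (g^[j] v) (g^[p-1+j] v) = σ (g^[p-1+j] v) - σ (g^[j] v) := by
    intro j
    have hw := horb' (p-1+j)
    have h1 := hg _ hw
    have hgw : g (g^[p-1+j] v) = g^[j] v := by
      rw [← Function.iterate_succ_apply' g (p-1+j) v]
      simp only [Nat.succ_eq_add_one]
      rw [show p-1+j+1 = j+p by omega, Function.iterate_add_apply, hper]
    rw [hgw] at h1
    exact ⟨h1.2.2.1, h1.2.2.2⟩
  set h : V → V := g^[p-1] with hhdef
  have hhk : ∀ k, h^[k] v = g^[(p-1)*k] v := by
    intro k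
    rw [hhdef, ← Function.iterate_mul]
  have hE' : ∀ k, E (h^[k] v) (h^[k+1] v) := by
    intro k
    have e2 : h^[k+1] v = g^[(p-1) + (p-1)*k] v := by
      rw [hhk (k+1), show (p-1)*(k+1) = (p-1) + (p-1)*k by ring]
    rw [hhk k, e2]
    exact (hkey ((p-1)*k)).1
  have ht' : ∀ k, δ (h^[k] v) (h^[k+1] v) = σ (h^[k+1] v) - σ (h^[k] v) := by
    intro k
    have e2 : h^[k+1] v = g^[(p-1) + (p-1)*k] v := by
      rw [hhk (k+1), show (p-1)*(k+1) = (p-1) + (p-1)*k by ring]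
    rw [hhk k, e2]
    exact (hkey ((p-1)*k)).2
  have hmul : ∀ n, g^[n*p] v = v := by
    intro n
    induction n with
    | zero => simp
    | succ i ih =>
      rw [show (i+1)*p = i*p + p by ring, Function.iterate_add_apply, hper, ih]
  have hper' : h^[p] v = v := by
    rw [hhk p]
    exact hmul (p-1)
  have hhv : h v ≠ v := by
    intro hcontra
    apply hgv
    have e : g (h v) = g^[p] v := by
      rw [hhdef, ← Function.iterate_succ_apply' g (p-1) v]
      simp only [Nat.succ_eq_add_one]
      rw [show p-1+1 = p by omega]
    rw [hcontra] at e
    rw [e, hper]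
  exact hS v hvS (h v) hhv (tight_orbit hnoneg D hD h σ v p hp hper' hhv hE' ht')

end Aux

section Main

variable {V : Type*} [Fintype V] {E : V → V → Prop} {δ : V → V → ℤ}

lemma main_aux (hnoneg : ¬ HasNegCycle E δ) (D : V → V → ℤ)
    (hD : ∀ v w, IsLeast {x : ℤ | ∃ l : List V, IsWalk E v w l ∧ walkWeight δ l = x} (D v w))
    (f₀ : V) (τ₂ : V → ℤ) (h₂ : τ₂ ∈ Tset E δ f₀) :
    ∀ (n : ℕ) (τ₁ : V → ℤ), τ₁ ∈ Tset E δ f₀ →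
      (∀ v : V, (∃ w, w ≠ v ∧ D v w + D w v = 0) → τ₁ v = τ₂ v) →
      (∑ v : V, |τ₁ v - τ₂ v|) = (n : ℤ) →
      ∃ (N : ℕ) (c : ℕ → V → ℤ), N ≤ n ∧ c 0 = τ₁ ∧ c N = τ₂ ∧
        ∀ i < N, ZRel (Tset E δ f₀) (c i) (c (i + 1)) := by
  classical
  intro n
  induction n with
  | zero =>
    intro τ₁ h₁ hagree hsum
    have heq : τ₁ = τ₂ := by
      funext u
      have h0 : ∀ v ∈ Finset.univ, (0:ℤ) ≤ |τ₁ v - τ₂ v| := fun v _ => abs_nonneg _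
      have := (Finset.sum_eq_zero_iff_of_nonneg h0).mp (by simpa using hsum) u (Finset.mem_univ u)
      have := abs_eq_zero.mp this
      omega
    exact ⟨0, fun _ => τ₁, le_refl 0, rfl, heq, by omega⟩
  | succ n ih =>
    intro τ₁ h₁ hagree hsum
    have hf₀ : τ₁ f₀ = τ₂ f₀ := by rw [h₁.2, h₂.2]
    by_cases hA : ∃ v, τ₂ v < τ₁ v
    · -- decrement case
      obtain ⟨v₀, hv₀⟩ := hA
      set σ : V → ℤ := fun u => min (τ₁ u) (τ₂ u) with hσdef
      have hσadm : ∀ v w, E v w → σ w - σ v ≤ δ v w := by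
        intro v w hE
        have a1 := h₁.1 v w hE
        have a2 := h₂.1 v w hE
        simp only [hσdef]
        omega
      have hle : ∀ v, σ v ≤ τ₁ v := fun v => min_le_left _ _
      have hSmem : ∀ v, σ v < τ₁ v ↔ τ₂ v < τ₁ v := by
        intro v; simp only [hσdef]; omega
      have hS : ∀ v, σ v < τ₁ v → ∀ w, w ≠ v → D v w + D w v ≠ 0 := by
        intro v hv w hw h0
        have := hagree v ⟨w, hw, h0⟩
        rw [hSmem] at hv
        omega
      obtain ⟨v, hvlt, hstrict⟩ := exists_good_dec hnoneg D hD σ τ₁ hσadm h₁.1 hle hS v₀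
        ((hSmem v₀).mpr hv₀)
      rw [hSmem] at hvlt
      have hvf₀ : v ≠ f₀ := by intro hv; rw [hv] at hvlt; omega
      set τ₁' : V → ℤ := Function.update τ₁ v (τ₁ v - 1) with hτ'def
      have hτ'v : τ₁' v = τ₁ v - 1 := Function.update_self v _ τ₁
      have hτ'w : ∀ w, w ≠ v → τ₁' w = τ₁ w := fun w hw => Function.update_of_ne hw _ τ₁
      have hτ'T : τ₁' ∈ Tset E δ f₀ := by
        constructor
        · intro a b hEab
          by_cases hb : b = v
          · subst hb
            by_cases ha : a = b
            · subst ha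
              rw [hτ'v]
              have := h₁.1 a a hEab
              omega
            · rw [hτ'v, hτ'w a ha]
              have := h₁.1 a b hEab
              omega
          · rw [hτ'w b hb]
            by_cases ha : a = v
            · subst ha
              rw [hτ'v]
              have := hstrict b hEab hb
              omega
            · rw [hτ'w a ha]
              exact h₁.1 a b hEab
        · rw [hτ'w f₀ (Ne.symm hvf₀)]
          exact h₁.2
      have hagree' : ∀ u : V, (∃ w, w ≠ u ∧ D u w + D w u = 0) → τ₁' u = τ₂ u := by
        intro u hu
        have := hagree u hu
        by_cases huv : u = v
        · subst huv; omega
        · rw [hτ'w u huv]; exact this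
      have hsum' : (∑ u : V, |τ₁' u - τ₂ u|) = (n : ℤ) := by
        have e1 : ∑ u : V, |τ₁ u - τ₂ u|
            = |τ₁ v - τ₂ v| + ∑ u ∈ Finset.univ.erase v, |τ₁ u - τ₂ u| :=
          (Finset.add_sum_erase _ _ (Finset.mem_univ v)).symm
        have e2 : ∑ u : V, |τ₁' u - τ₂ u|
            = |τ₁' v - τ₂ v| + ∑ u ∈ Finset.univ.erase v, |τ₁' u - τ₂ u| :=
          (Finset.add_sum_erase _ _ (Finset.mem_univ v)).symm
        have e3 : ∑ u ∈ Finset.univ.erase v, |τ₁' u - τ₂ u|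
            = ∑ u ∈ Finset.univ.erase v, |τ₁ u - τ₂ u| := by
          apply Finset.sum_congr rfl
          intro u hu
          rw [hτ'w u (Finset.ne_of_mem_erase hu)]
        have e4 : |τ₁' v - τ₂ v| = τ₁ v - τ₂ v - 1 := by
          rw [hτ'v, abs_of_nonneg (by omega)]
          ring
        have e5 : |τ₁ v - τ₂ v| = τ₁ v - τ₂ v := abs_of_nonneg (by omega)
        rw [e2, e3, e4]
        rw [e1, e5] at hsum
        push_cast at hsum ⊢
        omega
      obtain ⟨N', c', hN', hc0, hcN, hstep⟩ := ih τ₁' hτ'T hagree' hsum'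
      refine ⟨N' + 1, fun i => if i = 0 then τ₁ else c' (i - 1), by omega, by simp, ?_, ?_⟩
      · simpa using hcN
      · intro i hi
        rcases Nat.eq_zero_or_pos i with h0 | h0
        · subst h0
          simp only [if_pos rfl, if_neg (by omega : (1:ℕ) ≠ 0)]
          norm_num
          rw [hc0]
          exact ⟨h₁, hτ'T, v, hτ'w, Or.inr hτ'v⟩
        · have hi1 : i ≠ 0 := by omega
          have hi2 : i + 1 ≠ 0 := by omega
          simp only [if_neg hi1, if_neg hi2]
          have : i - 1 + 1 = i + 1 - 1 := by omega
          rw [show i + 1 - 1 = (i - 1) + 1 by omega]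
          exact hstep (i - 1) (by omega)
    · -- increment case
      push_neg at hA
      have hexists : ∃ v, τ₁ v < τ₂ v := by
        by_contra hB
        push_neg at hB
        have heq : ∀ v, τ₁ v = τ₂ v := fun v => le_antisymm (hA v) (hB v)
        have : (∑ v : V, |τ₁ v - τ₂ v|) = 0 := by
          apply Finset.sum_eq_zero
          intro u _
          rw [heq u]
          simp
        rw [this] at hsum
        omega
      obtain ⟨v₀, hv₀⟩ := hexists
      have hS : ∀ v, τ₁ v < τ₂ v → ∀ w, w ≠ v → D v w + D w v ≠ 0 := by
        intro v hv w hw h0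
        have := hagree v ⟨w, hw, h0⟩
        omega
      obtain ⟨v, hvlt, hstrict⟩ := exists_good_inc hnoneg D hD τ₁ τ₂ h₁.1 h₂.1 hA hS v₀ hv₀
      have hvf₀ : v ≠ f₀ := by intro hv; rw [hv] at hvlt; omega
      set τ₁' : V → ℤ := Function.update τ₁ v (τ₁ v + 1) with hτ'def
      have hτ'v : τ₁' v = τ₁ v + 1 := Function.update_self v _ τ₁
      have hτ'w : ∀ w, w ≠ v → τ₁' w = τ₁ w := fun w hw => Function.update_of_ne hw _ τ₁
      have hτ'T : τ₁' ∈ Tset E δ f₀ := by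
        constructor
        · intro a b hEab
          by_cases hb : b = v
          · subst hb
            by_cases ha : a = b
            · subst ha
              rw [hτ'v]
              have := h₁.1 a a hEab
              omega
            · rw [hτ'v, hτ'w a ha]
              have := hstrict a hEab ha
              omega
          · rw [hτ'w b hb]
            by_cases ha : a = v
            · subst ha
              rw [hτ'v]
              have := h₁.1 a b hEab
              omega
            · rw [hτ'w a ha]
              exact h₁.1 a b hEab
        · rw [hτ'w f₀ (Ne.symm hvf₀)]
          exact h₁.2
      have hagree' : ∀ u : V, (∃ w, w ≠ u ∧ D u w + D w u = 0) → τ₁' u = τ₂ u := by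
        intro u hu
        have := hagree u hu
        by_cases huv : u = v
        · subst huv; omega
        · rw [hτ'w u huv]; exact this
      have hsum' : (∑ u : V, |τ₁' u - τ₂ u|) = (n : ℤ) := by
        have e1 : ∑ u : V, |τ₁ u - τ₂ u|
            = |τ₁ v - τ₂ v| + ∑ u ∈ Finset.univ.erase v, |τ₁ u - τ₂ u| :=
          (Finset.add_sum_erase _ _ (Finset.mem_univ v)).symm
        have e2 : ∑ u : V, |τ₁' u - τ₂ u|
            = |τ₁' v - τ₂ v| + ∑ u ∈ Finset.univ.erase v, |τ₁' u - τ₂ u| :=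
          (Finset.add_sum_erase _ _ (Finset.mem_univ v)).symm
        have e3 : ∑ u ∈ Finset.univ.erase v, |τ₁' u - τ₂ u|
            = ∑ u ∈ Finset.univ.erase v, |τ₁ u - τ₂ u| := by
          apply Finset.sum_congr rfl
          intro u hu
          rw [hτ'w u (Finset.ne_of_mem_erase hu)]
        have e4 : |τ₁' v - τ₂ v| = τ₂ v - τ₁ v - 1 := by
          rw [hτ'v, abs_of_nonpos (by omega)]
          ring
        have e5 : |τ₁ v - τ₂ v| = τ₂ v - τ₁ v := by
          rw [abs_of_nonpos (by omega)]
          ring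
        rw [e2, e3, e4]
        rw [e1, e5] at hsum
        push_cast at hsum ⊢
        omega
      obtain ⟨N', c', hN', hc0, hcN, hstep⟩ := ih τ₁' hτ'T hagree' hsum'
      refine ⟨N' + 1, fun i => if i = 0 then τ₁ else c' (i - 1), by omega, by simp, ?_, ?_⟩
      · simpa using hcN
      · intro i hi
        rcases Nat.eq_zero_or_pos i with h0 | h0
        · subst h0
          simp only [if_pos rfl, if_neg (by omega : (1:ℕ) ≠ 0)]
          norm_num
          rw [hc0]
          exact ⟨h₁, hτ'T, v, hτ'w, Or.inl hτ'v⟩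
        · have hi1 : i ≠ 0 := by omega
          have hi2 : i + 1 ≠ 0 := by omega
          simp only [if_neg hi1, if_neg hi2]
          rw [show i + 1 - 1 = (i - 1) + 1 by omega]
          exact hstep (i - 1) (by omega)

end Main

/-- If `τ₁, τ₂ ∈ T` agree at every vertex belonging to a nontrivial cluster, then `τ₁` can
be transformed into `τ₂` by at most `Σ_v |τ₁ v - τ₂ v|` `Z`-transformations. -/
theorem zGraph_distance_le_l1_distance
    {V : Type*} [Fintype V] (E : V → V → Prop) (δ : V → V → ℤ)
    (hsymm : ∀ v w, E v w ↔ E w v)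
    (hconn : ∀ v w : V, ∃ l : List V, IsWalk E v w l)
    (hnoneg : ¬ HasNegCycle E δ)
    (D : V → V → ℤ)
    (hD : ∀ v w, IsLeast {x : ℤ | ∃ l : List V, IsWalk E v w l ∧ walkWeight δ l = x} (D v w))
    (f₀ : V) (τ₁ τ₂ : V → ℤ)
    (h₁ : τ₁ ∈ Tset E δ f₀) (h₂ : τ₂ ∈ Tset E δ f₀)
    (hagree : ∀ v : V, (∃ w, w ≠ v ∧ D v w + D w v = 0) → τ₁ v = τ₂ v) :
    ∃ (N : ℕ) (c : ℕ → V → ℤ),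
      (N : ℤ) ≤ ∑ v : V, |τ₁ v - τ₂ v| ∧
      c 0 = τ₁ ∧ c N = τ₂ ∧
      ∀ i < N, ZRel (Tset E δ f₀) (c i) (c (i + 1)) := by
  have hnn : (0:ℤ) ≤ ∑ v : V, |τ₁ v - τ₂ v| :=
    Finset.sum_nonneg fun v _ => abs_nonneg _
  set n : ℕ := (∑ v : V, |τ₁ v - τ₂ v|).toNat with hn
  have hsum : (∑ v : V, |τ₁ v - τ₂ v|) = (n : ℤ) := by
    rw [hn, Int.toNat_of_nonneg hnn]
  obtain ⟨N, c, hN, hc0, hcN, hstep⟩ := main_aux hnoneg D hD f₀ τ₂ h₂ n τ₁ h₁ hagree hsum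
  exact ⟨N, c, by rw [hsum]; exact_mod_cast hN, hc0, hcN, hstep⟩
end
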